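/- Let m ≥ 2, n ≥ 2, and let f be a maximal IC-coloring of K_{1(n),m} with vertices listed as u_1, …, u_{m+n} so that f(u_i) < f(u_{i+1}) for all i; set f_0 = 0, f_i = f(u_1) + ⋯ + f(u_i), s_0 = 0, s_i = f(u_i), r_i = s_i − ∑_{j=0}^{i−1} s_j, and k_0 = max{ j : u_j ∈ V_0 }. Suppose S_1 = { i < k_0 : r_i = 1 and u_i ∈ V_0 } is nonempty; let i_1 = min S_1, t = |{ i < i_1 : u_i ∈ V_0 }|, and S_2 = { i ≥ i_1 + 1 : u_i ∈ V_0 and f(u_i) > f_{i−1} − f(u_{i_1}) }. If S_2 is nonempty and i_2 = min S_2, then (as an inequality of rational numbers) f(K_{1(n),m}) ≤ 2^{m+n} − 2^{m+n−2}(1 − 2^{−(i_2−i_1)}) − (2^t − 1)(3 · 2^{m+n−i_1−1} + 2^{m+n−i_2−1}). -/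

import Mathlib

/-- The join `H₀ ∨ H₁` of two graphs: all edges of `H₀`, all edges of `H₁`, and all
pairs with one endpoint in each. -/
def graphJoin {α β : Type*} (G : SimpleGraph α) (H : SimpleGraph β) :
    SimpleGraph (α ⊕ β) where
  Adj x y :=
    match x, y with
    | Sum.inl a, Sum.inl b => G.Adj a b
    | Sum.inr a, Sum.inr b => H.Adj a b
    | Sum.inl _, Sum.inr _ => True
    | Sum.inr _, Sum.inl _ => True
  symm := by
    constructor
    rintro (a | a) (b | b) h
    · exact G.symm.symm _ _ h
    · trivial
    · trivial
    · exact H.symm.symm _ _ h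
  loopless := by
    constructor
    rintro (a | a) h
    · exact G.loopless.irrefl a h
    · exact H.loopless.irrefl a h

/-- A coloring `f : V(G) → ℕ` (positive-valued) is an IC-coloring if every integer
`k` with `1 ≤ k ≤ f(G)` is the `f`-sum of some nonempty vertex subset inducing a
connected subgraph. -/
def IsICColoring {α : Type*} [Fintype α] (G : SimpleGraph α) (f : α → ℕ) : Prop :=
  (∀ v, 0 < f v) ∧
    ∀ k : ℕ, 1 ≤ k → k ≤ ∑ v, f v →
      ∃ S : Finset α, S.Nonempty ∧ (G.induce (S : Set α)).Connected ∧
        ∑ v ∈ S, f v = k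

/-- The IC-index `M(G)`: the maximum of `f(G)` over all IC-colorings `f` of `G`. -/
noncomputable def ICIndex {α : Type*} [Fintype α] (G : SimpleGraph α) : ℕ :=
  sSup {t | ∃ f : α → ℕ, IsICColoring G f ∧ ∑ v, f v = t}

/-- `K_{1(n),m} = O_m ∨ K_n`: the complete `(n+1)`-partite graph with `n` parts of
size one and one part (`V₀ = Fin m`, the left summand) of size `m`. -/
def K1nm (m n : ℕ) : SimpleGraph (Fin m ⊕ Fin n) :=
  graphJoin (⊥ : SimpleGraph (Fin m)) (⊤ : SimpleGraph (Fin n))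

lemma two_pow_card_le_sum (E : Finset ℕ) : 2 ^ E.card ≤ (∑ e ∈ E, 2 ^ e) + 1 := by
  induction E using Finset.induction_on_max with
  | empty => simp
  | insert a s ha ih =>
      have hns : a ∉ s := fun h => lt_irrefl a (ha a h)
      have hcard : s.card ≤ a := by
        have hsub : s ⊆ Finset.range a := fun x hx => Finset.mem_range.2 (ha x hx)
        simpa using Finset.card_le_card hsub
      rw [Finset.card_insert_of_notMem hns, Finset.sum_insert hns]
      have h1 : (2:ℕ)^s.card ≤ 2^a := Nat.pow_le_pow_right (by norm_num) hcard
      calc 2^(s.card+1) = 2^s.card + 2^s.card := by ring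
        _ ≤ 2^a + ((∑ e ∈ s, 2^e) + 1) := Nat.add_le_add h1 ih
        _ = (2^a + ∑ e ∈ s, 2^e) + 1 := by ring

lemma not_connected_pair (m n : ℕ) (x y : Fin m) (hxy : x ≠ y) :
    ¬ ((K1nm m n).induce ({Sum.inl x, Sum.inl y} : Set (Fin m ⊕ Fin n))).Connected := by
  intro h
  have h2 : ((K1nm m n).induce ({Sum.inl x, Sum.inl y} : Set (Fin m ⊕ Fin n))) = ⊥ := by
    ext a b
    simp only [SimpleGraph.comap_adj, Function.Embedding.coe_subtype, SimpleGraph.bot_adj,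
      iff_false]
    intro hab
    have ha := a.2
    have hb := b.2
    simp only [Set.mem_insert_iff, Set.mem_singleton_iff] at ha hb
    rcases ha with ha | ha <;> rcases hb with hb | hb <;>
      rw [ha, hb] at hab <;> simp [K1nm, graphJoin] at hab
  rw [h2] at h
  have := h.preconnected ⟨Sum.inl x, by simp⟩ ⟨Sum.inl y, by simp⟩
  rw [SimpleGraph.reachable_bot] at this
  apply hxy
  simpa using congrArg Subtype.val this
set_option maxHeartbeats 2000000

/-- Setting as in Statement 15, with
`t = |{ i < i₁ : u i ∈ V₀ }|`: if `S₂ ≠ ∅` and `i₂ = min S₂`, then, in `ℚ`,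
`f(K_{1(n),m}) ≤ 2^{m+n} − 2^{m+n−2}(1 − 2^{−(i₂−i₁)})
  − (2^t − 1)(3 · 2^{m+n−i₁−1} + 2^{m+n−i₂−1})`. -/
theorem stmt_16 (m n : ℕ) (hm : 2 ≤ m) (hn : 2 ≤ n)
    (f : Fin m ⊕ Fin n → ℕ) (hf : IsICColoring (K1nm m n) f)
    (hmax : ∑ v, f v = ICIndex (K1nm m n))
    (u : ℕ → Fin m ⊕ Fin n) (hu : Set.BijOn u (Set.Icc 1 (m + n)) Set.univ)
    (hmono : ∀ i, 1 ≤ i → i + 1 ≤ m + n → f (u i) < f (u (i + 1)))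
    (s r : ℕ → ℤ) (hs0 : s 0 = 0)
    (hs : ∀ i, 1 ≤ i → i ≤ m + n → s i = f (u i))
    (hr : ∀ i, 1 ≤ i → i ≤ m + n → r i = s i - ∑ j ∈ Finset.range i, s j)
    (k₀ : ℕ) (hk₀mem : 1 ≤ k₀ ∧ k₀ ≤ m + n ∧ (u k₀).isLeft = true)
    (hk₀max : ∀ j, 1 ≤ j → j ≤ m + n → (u j).isLeft = true → j ≤ k₀)
    (i₁ : ℕ)
    (hi₁mem : 1 ≤ i₁ ∧ i₁ < k₀ ∧ r i₁ = 1 ∧ (u i₁).isLeft = true)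
    (hi₁min : ∀ j, 1 ≤ j → j < k₀ → r j = 1 → (u j).isLeft = true → i₁ ≤ j)
    (t : ℕ)
    (ht : t = ((Finset.Icc 1 (i₁ - 1)).filter (fun i => (u i).isLeft = true)).card)
    (i₂ : ℕ)
    (hi₂mem : i₁ + 1 ≤ i₂ ∧ i₂ ≤ m + n ∧ (u i₂).isLeft = true ∧
      (∑ k ∈ Finset.Icc 1 (i₂ - 1), (f (u k) : ℤ)) - f (u i₁) < (f (u i₂) : ℤ))
    (hi₂min : ∀ i, i₁ + 1 ≤ i → i ≤ m + n → (u i).isLeft = true →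
      (∑ k ∈ Finset.Icc 1 (i - 1), (f (u k) : ℤ)) - f (u i₁) < (f (u i) : ℤ) →
      i₂ ≤ i) :
    ((∑ v, f v : ℕ) : ℚ) ≤
      2 ^ ((m : ℤ) + n)
        - 2 ^ ((m : ℤ) + n - 2) * (1 - 2 ^ (-((i₂ : ℤ) - i₁)))
        - ((2 : ℚ) ^ t - 1) *
            (3 * 2 ^ ((m : ℤ) + n - i₁ - 1) + 2 ^ ((m : ℤ) + n - i₂ - 1)) := by

  have hpos : ∀ v, 0 < f v := hf.1
  -- strict monotonicity
  have monoLe : ∀ j i, 1 ≤ i → i ≤ j → j ≤ m + n → f (u i) ≤ f (u j) := by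
    intro j
    induction j with
    | zero => intro i h1 h2 _; omega
    | succ j ih =>
        intro i h1 h2 h3
        rcases eq_or_lt_of_le h2 with rfl | h
        · exact le_rfl
        · exact le_trans (ih i h1 (by omega) (by omega))
            (le_of_lt (hmono j (by omega) (by omega)))
  have monoLt : ∀ i j, 1 ≤ i → i < j → j ≤ m + n → f (u i) < f (u j) := by
    intro i j h1 h2 h3
    have hj : j - 1 + 1 = j := by omega
    have := hmono (j-1) (by omega) (by omega)
    rw [hj] at this
    exact lt_of_le_of_lt (monoLe (j-1) i h1 (by omega) (by omega)) this
  have usurj : ∀ v, ∃ j, 1 ≤ j ∧ j ≤ m + n ∧ u j = v := by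
    intro v
    obtain ⟨j, hj, hjv⟩ := hu.surjOn (Set.mem_univ v)
    exact ⟨j, hj.1, hj.2, hjv⟩
  -- partial sums
  set F : ℕ → ℕ := fun i => ∑ j ∈ Finset.Icc 1 i, f (u j) with hFdef
  have htot : ∑ v, f v = F (m + n) := by
    rw [hFdef]
    refine (Finset.sum_bij (fun j _ => u j) (fun a _ => Finset.mem_univ _) ?_ ?_
      (fun a _ => rfl)).symm
    · intro a ha b hb hab
      have ha' := Finset.mem_Icc.1 ha
      have hb' := Finset.mem_Icc.1 hb
      exact hu.injOn (Set.mem_Icc.2 ha') (Set.mem_Icc.2 hb') hab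
    · intro v _
      obtain ⟨j, h1, h2, h3⟩ := usurj v
      exact ⟨j, Finset.mem_Icc.2 ⟨h1, h2⟩, h3⟩
  have hFsucc : ∀ i, 1 ≤ i → F i = F (i-1) + f (u i) := by
    intro i hi
    have hins : Finset.Icc 1 i = insert i (Finset.Icc 1 (i-1)) := by
      ext j; simp only [Finset.mem_Icc, Finset.mem_insert]; omega
    show (∑ j ∈ Finset.Icc 1 i, f (u j)) = (∑ j ∈ Finset.Icc 1 (i-1), f (u j)) + f (u i)
    rw [hins, Finset.sum_insert (by simp only [Finset.mem_Icc]; omega)]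
    omega
  have hFmono : ∀ i j, i ≤ j → F i ≤ F j := by
    intro i j hij
    exact Finset.sum_le_sum_of_subset (by
      intro x hx; simp only [Finset.mem_Icc] at hx ⊢; omega)
  -- L2: if S misses all u_j for j ≥ i, its sum is at most F (i-1)
  have sub_sum : ∀ (S : Finset (Fin m ⊕ Fin n)) (i : ℕ), 1 ≤ i → i ≤ m + n + 1 →
      (∀ j, i ≤ j → j ≤ m + n → u j ∉ S) → ∑ v ∈ S, f v ≤ F (i-1) := by
    intro S i hi1 hi2 hS
    have hsub : S ⊆ (Finset.Icc 1 (i-1)).image u := by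
      intro v hv
      obtain ⟨j, hj1, hj2, rfl⟩ := usurj v
      have hj3 : j ≤ i - 1 := by
        by_contra hcon
        exact hS j (by omega) hj2 hv
      exact Finset.mem_image.2 ⟨j, Finset.mem_Icc.2 ⟨hj1, hj3⟩, rfl⟩
    calc ∑ v ∈ S, f v ≤ ∑ v ∈ (Finset.Icc 1 (i-1)).image u, f v :=
          Finset.sum_le_sum_of_subset hsub
      _ = ∑ j ∈ Finset.Icc 1 (i-1), f (u j) := by
          refine Finset.sum_image ?_
          intro a ha b hb hab
          have ha' := Finset.mem_Icc.1 ha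
          have hb' := Finset.mem_Icc.1 hb
          exact hu.injOn (Set.mem_Icc.2 ⟨ha'.1, by omega⟩)
            (Set.mem_Icc.2 ⟨hb'.1, by omega⟩) hab
  -- Lemma A
  have lemA : ∀ i, 1 ≤ i → i ≤ m + n → f (u i) ≤ F (i-1) + 1 := by
    intro i hi1 hi2
    by_contra hgt
    push_neg at hgt
    have hkle : F (i-1) + 1 ≤ ∑ v, f v := by
      rw [htot]
      have h1 : F (i-1) + f (u i) = F i := (hFsucc i hi1).symm
      have := hFmono i (m+n) hi2
      have := hpos (u i)
      omega
    obtain ⟨S, hne, hconn, hsum⟩ := hf.2 (F (i-1) + 1) (by omega) hkle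
    have hS : ∀ j, i ≤ j → j ≤ m + n → u j ∉ S := by
      intro j hj1 hj2 hmem
      have h1 : f (u j) ≤ ∑ v ∈ S, f v :=
        Finset.single_le_sum (fun v _ => Nat.zero_le _) hmem
      have h2 : f (u i) ≤ f (u j) := monoLe j i hi1 hj1 hj2
      omega
    have := sub_sum S i hi1 (by omega) hS
    omega
  -- translate r into f/F language
  have hrtrans : ∀ i, 1 ≤ i → i ≤ m + n → r i = (f (u i) : ℤ) - (F (i-1) : ℤ) := by
    intro i h1 h2
    rw [hr i h1 h2, hs i h1 h2]
    congr 1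
    have hins : Finset.range i = insert 0 (Finset.Icc 1 (i-1)) := by
      ext j; simp only [Finset.mem_range, Finset.mem_insert, Finset.mem_Icc]; omega
    rw [hins, Finset.sum_insert (by simp only [Finset.mem_Icc]; omega), hs0, zero_add]
    rw [show ((F (i-1) : ℕ) : ℤ) = ∑ j ∈ Finset.Icc 1 (i-1), (f (u j) : ℤ) by push_cast [hFdef]; rfl]
    refine Finset.sum_congr rfl ?_
    intro j hj
    have hj' := Finset.mem_Icc.1 hj
    exact hs j hj'.1 (by omega)
  have hi₁le : i₁ ≤ m + n := by omega
  have hU1 : f (u i₁) = F (i₁ - 1) + 1 := by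
    have h1 := hrtrans i₁ hi₁mem.1 hi₁le
    rw [hi₁mem.2.2.1] at h1
    omega
  -- deficit ≥ 1 at left vertices before i₁
  have hT : ∀ j ∈ (Finset.Icc 1 (i₁ - 1)).filter (fun i => (u i).isLeft = true),
      f (u j) ≤ F (j - 1) := by
    intro j hj
    rw [Finset.mem_filter, Finset.mem_Icc] at hj
    have hjmn : j ≤ m + n := by omega
    have h1 := hrtrans j hj.1.1 hjmn
    have h2 : r j ≤ 1 := by
      have := lemA j hj.1.1 hjmn
      omega
    have h3 : r j ≠ 1 := by
      intro hcon
      have := hi₁min j hj.1.1 (by omega) hcon hj.2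
      omega
    omega
  -- unique subset with sum f (u i₁)
  have huniq : ∀ S : Finset (Fin m ⊕ Fin n), S.Nonempty →
      ∑ v ∈ S, f v = f (u i₁) → S = {u i₁} := by
    intro S hne hsum
    by_cases hmem : u i₁ ∈ S
    · have hins := Finset.insert_erase hmem
      have hsplit : f (u i₁) + ∑ v ∈ S.erase (u i₁), f v = ∑ v ∈ S, f v := by
        rw [← hins, Finset.sum_insert (Finset.notMem_erase _ _)]
        rw [hins]
      have hzero : ∑ v ∈ S.erase (u i₁), f v = 0 := by omega
      have hemp : S.erase (u i₁) = ∅ := by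
        by_contra hcon
        obtain ⟨w, hw⟩ := Finset.nonempty_iff_ne_empty.2 hcon
        have : f w ≤ ∑ v ∈ S.erase (u i₁), f v :=
          Finset.single_le_sum (fun v _ => Nat.zero_le _) hw
        have := hpos w
        omega
      rcases (Finset.erase_eq_empty_iff S (u i₁)).1 hemp with h | h
      · exact absurd h (Finset.nonempty_iff_ne_empty.1 hne)
      · exact h
    · exfalso
      have hS : ∀ j, i₁ ≤ j → j ≤ m + n → u j ∉ S := by
        intro j hj1 hj2 hjS
        rcases eq_or_lt_of_le hj1 with rfl | hlt
        · exact hmem hjS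
        · have h1 : f (u j) ≤ ∑ v ∈ S, f v :=
            Finset.single_le_sum (fun v _ => Nat.zero_le _) hjS
          have h2 := monoLt i₁ j hi₁mem.1 hlt hj2
          omega
      have := sub_sum S i₁ hi₁mem.1 (by omega) hS
      omega
  -- Lemma C : some vertex beyond i₂ has value ≤ f(u i₁) + f(u i₂)
  have hne12 : u i₁ ≠ u i₂ := by
    have := monoLt i₁ i₂ hi₁mem.1 (by omega) hi₂mem.2.1
    intro hcon; rw [hcon] at this; omega
  have hpairS : ¬ ((K1nm m n).induce (({u i₁, u i₂} : Finset (Fin m ⊕ Fin n)) : Set (Fin m ⊕ Fin n))).Connected := by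
    obtain ⟨x, hx⟩ := Sum.isLeft_iff.1 hi₁mem.2.2.2
    obtain ⟨y, hy⟩ := Sum.isLeft_iff.1 hi₂mem.2.2.1
    have hxy : x ≠ y := by
      intro hcon; apply hne12; rw [hx, hy, hcon]
    have hseteq : (({u i₁, u i₂} : Finset (Fin m ⊕ Fin n)) : Set (Fin m ⊕ Fin n))
        = ({Sum.inl x, Sum.inl y} : Set (Fin m ⊕ Fin n)) := by
      rw [hx, hy]; simp
    rw [hseteq]
    exact not_connected_pair m n x y hxy
  have lemC : i₂ + 1 ≤ m + n ∧ f (u (i₂ + 1)) ≤ f (u i₁) + f (u i₂) := by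
    have hkle : f (u i₁) + f (u i₂) ≤ ∑ v, f v := by
      have h1 : ∑ v ∈ ({u i₁, u i₂} : Finset (Fin m ⊕ Fin n)), f v = f (u i₁) + f (u i₂) :=
        Finset.sum_pair hne12
      calc f (u i₁) + f (u i₂) = ∑ v ∈ ({u i₁, u i₂} : Finset (Fin m ⊕ Fin n)), f v := h1.symm
        _ ≤ ∑ v, f v := Finset.sum_le_sum_of_subset (Finset.subset_univ _)
    obtain ⟨S, hne, hconn, hsum⟩ := hf.2 (f (u i₁) + f (u i₂))
      (by have := hpos (u i₁); omega) hkle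
    have hexists : ∃ j, i₂ + 1 ≤ j ∧ j ≤ m + n ∧ u j ∈ S := by
      by_contra hno
      push_neg at hno
      by_cases hmem : u i₂ ∈ S
      · have hins := Finset.insert_erase hmem
        have hsplit : f (u i₂) + ∑ v ∈ S.erase (u i₂), f v = ∑ v ∈ S, f v := by
          rw [← hins, Finset.sum_insert (Finset.notMem_erase _ _)]
          rw [hins]
        have hE : ∑ v ∈ S.erase (u i₂), f v = f (u i₁) := by omega
        have hEne : (S.erase (u i₂)).Nonempty := by
          by_contra hcon
          rw [Finset.not_nonempty_iff_eq_empty] at hcon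
          rw [hcon, Finset.sum_empty] at hE
          have := hpos (u i₁); omega
        have hEeq := huniq _ hEne hE
        have hSeq : S = {u i₂, u i₁} := by
          rw [← hins, hEeq]
        rw [hSeq] at hconn
        apply hpairS
        have : ({u i₂, u i₁} : Finset (Fin m ⊕ Fin n)) = {u i₁, u i₂} :=
          Finset.pair_comm _ _
        rwa [this] at hconn
      · have hS : ∀ j, i₂ ≤ j → j ≤ m + n → u j ∉ S := by
          intro j hj1 hj2 hjS
          rcases eq_or_lt_of_le hj1 with rfl | hlt
          · exact hmem hjS
          · exact hno j (by omega) hj2 hjS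
        have h1 := sub_sum S i₂ (by omega) (by omega) hS
        have h2 : (F (i₂ - 1) : ℤ) < f (u i₁) + f (u i₂) := by
          have h3 := hi₂mem.2.2.2
          have h4 : ((F (i₂-1) : ℕ) : ℤ) = ∑ k ∈ Finset.Icc 1 (i₂-1), (f (u k) : ℤ) := by
            push_cast [hFdef]; rfl
          omega
        have : ((∑ v ∈ S, f v : ℕ) : ℤ) = (f (u i₁) : ℤ) + f (u i₂) := by
          rw [hsum]; push_cast; ring
        omega
    obtain ⟨j, hj1, hj2, hjS⟩ := hexists
    constructor
    · omega
    · have h1 : f (u j) ≤ ∑ v ∈ S, f v :=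
        Finset.single_le_sum (fun v _ => Nat.zero_le _) hjS
      have h2 : f (u (i₂+1)) ≤ f (u j) := monoLe j (i₂+1) (by omega) hj1 hj2
      omega
  -- deficits
  set δ : ℕ → ℤ := fun i => (F (i-1) : ℤ) + 1 - (f (u i) : ℤ) with hδdef
  have hδ0 : ∀ i, 1 ≤ i → i ≤ m + n → 0 ≤ δ i := by
    intro i h1 h2
    have := lemA i h1 h2
    simp only [hδdef]
    omega
  have hδ1 : ∀ j ∈ (Finset.Icc 1 (i₁ - 1)).filter (fun i => (u i).isLeft = true),
      1 ≤ δ j := by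
    intro j hj
    have := hT j hj
    simp only [hδdef]
    omega
  -- the fundamental identity
  have hID : ∀ N, (F N : ℤ) + ∑ i ∈ Finset.Icc 1 N, δ i * 2^(N-i) = 2^N - 1 := by
    intro N
    induction N with
    | zero =>
        rw [show Finset.Icc 1 0 = (∅ : Finset ℕ) from Finset.Icc_eq_empty (by omega)]
        simp [hFdef]
    | succ N ih =>
        have h1 : Finset.Icc 1 (N+1) = insert (N+1) (Finset.Icc 1 N) := by
          ext j; simp only [Finset.mem_Icc, Finset.mem_insert]; omega
        have h2 : ∑ i ∈ Finset.Icc 1 N, δ i * 2^(N+1-i)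
            = 2 * ∑ i ∈ Finset.Icc 1 N, δ i * 2^(N-i) := by
          rw [Finset.mul_sum]
          refine Finset.sum_congr rfl ?_
          intro i hi
          have hi' := Finset.mem_Icc.1 hi
          rw [show N+1-i = (N-i)+1 by omega, pow_succ]
          ring
        have h3 : F (N+1) = F N + f (u (N+1)) := by
          have := hFsucc (N+1) (by omega)
          simpa using this
        have h4 : δ (N+1) = (F N : ℤ) + 1 - (f (u (N+1)) : ℤ) := by
          simp [hδdef]
        rw [h1, Finset.sum_insert (by simp only [Finset.mem_Icc]; omega), h2, h3, h4]
        push_cast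
        rw [Nat.sub_self, pow_zero, pow_succ]
        push_cast at ih
        linarith
  -- P and Q
  set P : ℤ := ∑ i ∈ Finset.Icc 1 (i₁-1), δ i * 2^(i₁-1-i) with hPdef
  set Q : ℤ := ∑ i ∈ Finset.Icc 1 (i₂-1), δ i * 2^(i₂-1-i) with hQdef
  have hGi₁ : (F (i₁-1) : ℤ) = 2^(i₁-1) - 1 - P := by
    have := hID (i₁-1); linarith
  have hGi₂ : (F (i₂-1) : ℤ) = 2^(i₂-1) - 1 - Q := by
    have := hID (i₂-1); linarith
  -- P ≥ 2^t - 1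
  have hP : (2:ℤ)^t - 1 ≤ P := by
    set T := (Finset.Icc 1 (i₁ - 1)).filter (fun i => (u i).isLeft = true) with hTdef
    have hstep1 : ∑ j ∈ T, δ j * 2^(i₁-1-j) ≤ P := by
      refine Finset.sum_le_sum_of_subset_of_nonneg (Finset.filter_subset _ _) ?_
      intro i hi _
      have hi' := Finset.mem_Icc.1 hi
      exact mul_nonneg (hδ0 i hi'.1 (by omega)) (by positivity)
    have hstep2 : ∑ j ∈ T, (2:ℤ)^(i₁-1-j) ≤ ∑ j ∈ T, δ j * 2^(i₁-1-j) := by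
      refine Finset.sum_le_sum ?_
      intro j hj
      have h1 := hδ1 j hj
      nlinarith [pow_pos (by norm_num : (0:ℤ) < 2) (i₁-1-j)]
    have hstep3 : (2:ℤ)^t - 1 ≤ ∑ j ∈ T, (2:ℤ)^(i₁-1-j) := by
      have hinj : ∀ a ∈ T, ∀ b ∈ T, i₁-1-a = i₁-1-b → a = b := by
        intro a ha b hb hab
        rw [hTdef, Finset.mem_filter, Finset.mem_Icc] at ha hb
        omega
      have hnat : (2:ℕ)^t ≤ (∑ j ∈ T, (2:ℕ)^(i₁-1-j)) + 1 := by
        have hcard : (T.image (fun j => i₁-1-j)).card = t := by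
          rw [Finset.card_image_of_injOn hinj, ht]
        have h5 := two_pow_card_le_sum (T.image (fun j => i₁-1-j))
        rw [hcard] at h5
        rwa [Finset.sum_image hinj] at h5
      have : ((2:ℕ)^t : ℤ) ≤ ((∑ j ∈ T, (2:ℕ)^(i₁-1-j) : ℕ) : ℤ) + 1 := by
        exact_mod_cast hnat
      push_cast at this
      linarith
    linarith
  -- Q ≥ 2^(i₂-i₁) * P
  have hQP : 2^(i₂-i₁) * P ≤ Q := by
    have hstep1 : ∑ i ∈ Finset.Icc 1 (i₁-1), δ i * 2^(i₂-1-i) ≤ Q := by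
      refine Finset.sum_le_sum_of_subset_of_nonneg ?_ ?_
      · intro x hx; simp only [Finset.mem_Icc] at hx ⊢; omega
      · intro i hi _
        have hi' := Finset.mem_Icc.1 hi
        exact mul_nonneg (hδ0 i hi'.1 (by omega)) (by positivity)
    have hstep2 : ∑ i ∈ Finset.Icc 1 (i₁-1), δ i * 2^(i₂-1-i)
        = 2^(i₂-i₁) * P := by
      rw [hPdef, Finset.mul_sum]
      refine Finset.sum_congr rfl ?_
      intro i hi
      have hi' := Finset.mem_Icc.1 hi
      rw [show i₂-1-i = (i₂-i₁)+(i₁-1-i) by omega, pow_add]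
      ring
    linarith
  -- lower bound for the global deficit sum
  have hD : 2^(m+n-i₂+1) * Q + 2^(m+n-i₂-1) * δ (i₂+1)
      ≤ ∑ i ∈ Finset.Icc 1 (m+n), δ i * 2^(m+n-i) := by
    have hS0sub : insert (i₂+1) (Finset.Icc 1 (i₂-1)) ⊆ Finset.Icc 1 (m+n) := by
      intro x hx
      simp only [Finset.mem_insert, Finset.mem_Icc] at hx ⊢
      rcases hx with rfl | hx
      · exact ⟨by omega, lemC.1⟩
      · omega
    have h0 : ∑ i ∈ insert (i₂+1) (Finset.Icc 1 (i₂-1)), δ i * 2^(m+n-i)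
        ≤ ∑ i ∈ Finset.Icc 1 (m+n), δ i * 2^(m+n-i) := by
      refine Finset.sum_le_sum_of_subset_of_nonneg hS0sub ?_
      intro i hi _
      have hi' := Finset.mem_Icc.1 hi
      exact mul_nonneg (hδ0 i hi'.1 hi'.2) (by positivity)
    have h1 : ∑ i ∈ insert (i₂+1) (Finset.Icc 1 (i₂-1)), δ i * 2^(m+n-i)
        = δ (i₂+1) * 2^(m+n-i₂-1) + ∑ i ∈ Finset.Icc 1 (i₂-1), δ i * 2^(m+n-i) := by
      rw [Finset.sum_insert (by simp only [Finset.mem_Icc]; omega)]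
      rw [show m+n-(i₂+1) = m+n-i₂-1 by omega]
    have h2 : ∑ i ∈ Finset.Icc 1 (i₂-1), δ i * 2^(m+n-i) = 2^(m+n-i₂+1) * Q := by
      rw [hQdef, Finset.mul_sum]
      refine Finset.sum_congr rfl ?_
      intro i hi
      have hi' := Finset.mem_Icc.1 hi
      have hi2mn : i₂ ≤ m + n := hi₂mem.2.1
      rw [show m+n-i = (m+n-i₂+1)+(i₂-1-i) by omega, pow_add]
      ring
    rw [h1, h2] at h0
    linarith
  -- deficit at i₂ + 1
  have hδC : (F (i₂-1) : ℤ) - (f (u i₁) : ℤ) + 1 ≤ δ (i₂+1) := by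
    have h1 : δ (i₂+1) = (F i₂ : ℤ) + 1 - (f (u (i₂+1)) : ℤ) := by simp [hδdef]
    have h2 : F i₂ = F (i₂-1) + f (u i₂) := hFsucc i₂ (by omega)
    have h3 := lemC.2
    rw [h1, h2]
    push_cast
    omega
  have hAi₁Z : (f (u i₁) : ℤ) = 2^(i₁-1) - P := by
    rw [hU1]; push_cast; rw [hGi₁]; ring
  -- decompose indices
  have hi2mn : i₂ + 1 ≤ m + n := lemC.1
  obtain ⟨e, he⟩ : ∃ e, i₁ = e + 1 := ⟨i₁ - 1, by omega⟩
  obtain ⟨dd, hdd⟩ : ∃ dd, i₂ = e + 1 + dd := ⟨i₂ - i₁, by omega⟩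
  obtain ⟨c, hc⟩ : ∃ c, m + n = i₂ + 1 + c := ⟨m + n - i₂ - 1, by omega⟩
  have hMeq : m + n = e + dd + c + 2 := by omega
  -- rewrite nat-sub exponents
  rw [show i₁ - 1 = e by omega] at hGi₁ hAi₁Z
  rw [show i₂ - 1 = e + dd by omega] at hGi₂ hδC
  rw [show i₂ - i₁ = dd by omega] at hQP
  rw [show m + n - i₂ + 1 = c + 2 by omega, show m + n - i₂ - 1 = c by omega] at hD
  -- the key integer inequality
  have h2c : (0:ℤ) ≤ 2^c := by positivity
  have hδCQ : 2^(e+dd) - 2^e - Q + P ≤ δ (i₂+1) := by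
    rw [hGi₂] at hδC
    rw [hAi₁Z] at hδC
    linarith
  have hDM : 2^(c+2) * Q + 2^c * (2^(e+dd) - 2^e - Q + P)
      ≤ ∑ i ∈ Finset.Icc 1 (m+n), δ i * 2^(m+n-i) := by
    have := mul_le_mul_of_nonneg_left hδCQ h2c
    linarith
  have hIDM := hID (m+n)
  have e1 : (2:ℤ)^(e+dd) = 2^e * 2^dd := pow_add 2 e dd
  have e2 : (2:ℤ)^(e+dd+c) = 2^e * 2^dd * 2^c := by rw [pow_add, e1]
  have e3 : (2:ℤ)^(e+c) = 2^e * 2^c := pow_add 2 e c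
  have e4 : (2:ℤ)^(dd+c) = 2^dd * 2^c := pow_add 2 dd c
  have e5 : (2:ℤ)^(c+2) = 4 * 2^c := by rw [pow_add]; ring
  have e6 : (2:ℤ)^(e+dd+c+2) = 4 * (2^e * 2^dd * 2^c) := by rw [pow_add, e2]; ring
  have e7 : (2:ℤ)^(m+n) = 4 * (2^e * 2^dd * 2^c) := by rw [hMeq, e6]
  clear_value P Q δ F
  clear hPdef hQdef hδdef hFdef hID hD hδC hδCQ hGi₁ hGi₂ hAi₁Z hU1 hδ0 hδ1 hT
  clear huniq hne12 hpairS lemC sub_sum lemA hrtrans monoLe monoLt usurj hFsucc hFmono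
  clear hf hmax hu hmono hs hr hs0 hk₀mem hk₀max hi₁min hi₂min hi₁mem hpos
  have key : (F (m+n) : ℤ)
      ≤ 2^(e+dd+c+2) - 2^(e+dd+c) + 2^(e+c) - (2^t-1)*(3*2^(dd+c)+2^c) := by
    rw [e1, e5] at hDM
    rw [e7] at hIDM
    rw [e6, e2, e3, e4]
    have hYX : (0:ℤ) ≤ 2^dd * 2^c := by positivity
    have q1 : 2^c * ((2:ℤ)^dd * P) ≤ 2^c * Q := mul_le_mul_of_nonneg_left hQP h2c
    have q2 : ((2:ℤ)^t - 1) * (2^dd * 2^c) ≤ P * (2^dd * 2^c) :=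
      mul_le_mul_of_nonneg_right hP hYX
    have q3 : ((2:ℤ)^t - 1) * 2^c ≤ P * 2^c := mul_le_mul_of_nonneg_right hP h2c
    linarith
  -- final conversion to ℚ
  have hFQ : ((∑ v, f v : ℕ) : ℚ) = ((F (m+n) : ℤ) : ℚ) := by
    rw [htot]; push_cast; ring
  have h2ne : (2:ℚ) ≠ 0 := two_ne_zero
  have hRHS : (2:ℚ) ^ ((m : ℤ) + n)
        - 2 ^ ((m : ℤ) + n - 2) * (1 - 2 ^ (-((i₂ : ℤ) - i₁)))
        - ((2 : ℚ) ^ t - 1) *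
            (3 * 2 ^ ((m : ℤ) + n - i₁ - 1) + 2 ^ ((m : ℤ) + n - i₂ - 1))
      = (((2^(e+dd+c+2) - 2^(e+dd+c) + 2^(e+c) - (2^t-1)*(3*2^(dd+c)+2^c) : ℤ)) : ℚ) := by
    rw [show ((m:ℤ) + n - 2) = ((e+dd+c : ℕ):ℤ) by push_cast; omega,
        show ((m:ℤ) + n - i₁ - 1) = ((dd+c : ℕ):ℤ) by push_cast; omega,
        show ((m:ℤ) + n - i₂ - 1) = ((c : ℕ):ℤ) by push_cast; omega,
        show ((m:ℤ) + n) = ((e+dd+c+2 : ℕ):ℤ) by push_cast; omega,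
        show (-((i₂:ℤ) - i₁)) = -((dd : ℕ):ℤ) by push_cast; omega]
    rw [zpow_natCast, zpow_natCast, zpow_natCast, zpow_natCast, zpow_neg, zpow_natCast]
    have hpow : (2:ℚ)^(e+dd+c) * ((2:ℚ)^dd)⁻¹ = 2^(e+c) := by
      rw [show e+dd+c = (e+c)+dd by omega, pow_add]
      field_simp
    push_cast
    rw [mul_sub, hpow]
    ring
  rw [hFQ, hRHS]
  exact_mod_cast key
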